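/- arXiv:1208.2617 — 2 statements merged into one kernel-verified Lean document; each statement's English description precedes it below -/
import Mathlib

section
/- Let K be a characteristic vector for M, E ⊆ V, and let v₁, v₂ ∈ E be distinct. Then b_{v₁}(K,E) + b_{v₂}(K + 2v₁*, E∖{v₁}) = b_{v₂}(K,E) + b_{v₁}(K + 2v₂*, E∖{v₂}). -/
open Finset

variable {V : Type*}

/-- `M` is negative definite: `xᵀMx < 0` for every nonzero `x ∈ ℝ^V`. -/
def NegDef [Fintype V] (M : V → V → ℤ) : Prop :=
  ∀ x : V → ℝ, x ≠ 0 → (∑ v, ∑ w, (M v w : ℝ) * x v * x w) < 0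

/-- `K` is a characteristic vector for `M`: `K(v) ≡ v·v (mod 2)` for all `v`. -/
def IsChar (M : V → V → ℤ) (K : V → ℤ) : Prop :=
  ∀ v, Int.ModEq 2 (K v) (M v v)

/-- `f(K, I) = (1/2)(Σ_{v∈I} K(v) + (Σ_{v∈I} v)·(Σ_{v∈I} v))` (an exact integer division
for characteristic `K`). -/
def latF (M : V → V → ℤ) (K : V → ℤ) (I : Finset V) : ℤ :=
  ((∑ v ∈ I, K v) + ∑ v ∈ I, ∑ w ∈ I, M v w) / 2

/-- `g(K, E) = min_{I ⊆ E} f(K, I)`. -/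
def latG (M : V → V → ℤ) (K : V → ℤ) (E : Finset V) : ℤ :=
  (E.powerset.image (latF M K)).min'
    ⟨_, Finset.mem_image_of_mem _ (Finset.empty_mem_powerset E)⟩

/-- `B_v(K, E) = min { f(K, I) : v ∈ I ⊆ E }` (for `v ∈ E`). -/
def latB [DecidableEq V] (M : V → V → ℤ) (K : V → ℤ) (E : Finset V) (v : V) : ℤ :=
  ((E.erase v).powerset.image (fun I => latF M K (insert v I))).min'
    ⟨_, Finset.mem_image_of_mem _ (Finset.empty_mem_powerset _)⟩

/-- `a_v(K,E) = A_v(K,E) - g(K,E) = g(K, E∖{v}) - g(K,E)`. -/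
def lata [DecidableEq V] (M : V → V → ℤ) (K : V → ℤ) (E : Finset V) (v : V) : ℤ :=
  latG M K (E.erase v) - latG M K E

/-- `b_v(K,E) = B_v(K,E) - g(K,E)`. -/
def latb [DecidableEq V] (M : V → V → ℤ) (K : V → ℤ) (E : Finset V) (v : V) : ℤ :=
  latB M K E v - latG M K E


section Aux
variable [DecidableEq V]

omit [DecidableEq V] in
lemma char_even (M : V → V → ℤ) (K : V → ℤ) (hK : IsChar M K) (v : V) :
    2 ∣ (K v + M v v) := by
  have h := hK v
  unfold Int.ModEq at h
  omega

omit [DecidableEq V] in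
lemma char_shift (M : V → V → ℤ) (K : V → ℤ) (hK : IsChar M K) (v : V) :
    IsChar M (fun w => K w + 2 * M v w) := by
  intro w
  have h := hK w
  show (K w + 2 * M v w) % 2 = M w w % 2
  unfold Int.ModEq at h
  omega

lemma num_insert (M : V → V → ℤ) (hsym : ∀ v w, M v w = M w v)
    (K : V → ℤ) (v : V) (I : Finset V) (hv : v ∉ I) :
    ((∑ w ∈ insert v I, K w) + ∑ x ∈ insert v I, ∑ y ∈ insert v I, M x y)
      = (K v + M v v) + ((∑ w ∈ I, (K w + 2 * M v w)) + ∑ x ∈ I, ∑ y ∈ I, M x y) := by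
  rw [Finset.sum_insert hv, Finset.sum_insert hv, Finset.sum_insert hv]
  have h1 : ∑ x ∈ I, ∑ y ∈ insert v I, M x y
      = (∑ x ∈ I, M x v) + ∑ x ∈ I, ∑ y ∈ I, M x y := by
    rw [← Finset.sum_add_distrib]
    exact Finset.sum_congr rfl (fun x _ => Finset.sum_insert hv)
  have h2 : ∑ x ∈ I, M x v = ∑ x ∈ I, M v x :=
    Finset.sum_congr rfl (fun x _ => hsym x v)
  rw [h1, h2, Finset.sum_add_distrib, ← Finset.mul_sum]
  ring

lemma num_even (M : V → V → ℤ) (hsym : ∀ v w, M v w = M w v)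
    (K : V → ℤ) (hK : IsChar M K) (I : Finset V) :
    2 ∣ ((∑ w ∈ I, K w) + ∑ x ∈ I, ∑ y ∈ I, M x y) := by
  induction I using Finset.induction_on generalizing K with
  | empty => simp
  | @insert v I hv ih =>
    rw [num_insert M hsym K v I hv]
    exact dvd_add (char_even M K hK v) (ih _ (char_shift M K hK v))

lemma latF_insert (M : V → V → ℤ) (hsym : ∀ v w, M v w = M w v)
    (K : V → ℤ) (hK : IsChar M K) (v : V) (I : Finset V) (hv : v ∉ I) :
    latF M K (insert v I) = (K v + M v v) / 2 + latF M (fun w => K w + 2 * M v w) I := by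
  unfold latF
  rw [num_insert M hsym K v I hv]
  obtain ⟨a, ha⟩ := char_even M K hK v
  obtain ⟨b, hb⟩ := num_even M hsym _ (char_shift M K hK v) I
  rw [ha, hb]
  omega

omit [DecidableEq V] in
lemma min'_set_congr {s t : Finset ℤ} (h : s = t) (hs : s.Nonempty) :
    s.min' hs = t.min' (h ▸ hs) := by subst h; rfl

omit [DecidableEq V] in
lemma min'_image_add {α : Type*} [DecidableEq α] (s : Finset α) (hs : s.Nonempty)
    (f : α → ℤ) (c : ℤ) :
    (s.image (fun x => c + f x)).min' (hs.image _) = c + (s.image f).min' (hs.image _) := by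
  apply le_antisymm
  · obtain ⟨x, hx, hfx⟩ := Finset.mem_image.mp ((s.image f).min'_mem (hs.image _))
    calc (s.image (fun x => c + f x)).min' (hs.image _) ≤ c + f x :=
          Finset.min'_le _ _ (Finset.mem_image_of_mem _ hx)
      _ = _ := by rw [hfx]
  · obtain ⟨x, hx, hfx⟩ := Finset.mem_image.mp
      ((s.image (fun x => c + f x)).min'_mem (hs.image _))
    rw [← hfx]
    have := Finset.min'_le _ _ (Finset.mem_image_of_mem f hx)
    linarith

lemma latB_eq (M : V → V → ℤ) (hsym : ∀ v w, M v w = M w v)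
    (K : V → ℤ) (hK : IsChar M K) (E : Finset V) (v : V) :
    latB M K E v = (K v + M v v) / 2 + latG M (fun w => K w + 2 * M v w) (E.erase v) := by
  unfold latB latG
  have himg : (E.erase v).powerset.image (fun I => latF M K (insert v I))
      = (E.erase v).powerset.image
          (fun I => (K v + M v v) / 2 + latF M (fun w => K w + 2 * M v w) I) := by
    apply Finset.image_congr
    intro I hI
    simp only [Finset.mem_coe, Finset.mem_powerset] at hI
    exact latF_insert M hsym K hK v I (fun h => (Finset.mem_erase.mp (hI h)).1 rfl)
  erw [min'_set_congr himg]
  have hne : (E.erase v).powerset.Nonempty := ⟨∅, Finset.empty_mem_powerset _⟩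
  rw [min'_image_add (E.erase v).powerset hne (latF M (fun w => K w + 2 * M v w)) _]

end Aux

/-- `b_{v₁}(K,E) + b_{v₂}(K + 2v₁*, E∖{v₁}) = b_{v₂}(K,E) + b_{v₁}(K + 2v₂*, E∖{v₂})`. -/
theorem stmt4 [Fintype V] [DecidableEq V] (M : V → V → ℤ)
    (hsym : ∀ v w, M v w = M w v)
    (hoff : ∀ v w, v ≠ w → M v w = 0 ∨ M v w = 1)
    (hneg : NegDef M)
    (K : V → ℤ) (hK : IsChar M K) (E : Finset V) (v₁ v₂ : V)
    (h1 : v₁ ∈ E) (h2 : v₂ ∈ E) (hne : v₁ ≠ v₂) :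
    latb M K E v₁ + latb M (fun w => K w + 2 * M v₁ w) (E.erase v₁) v₂
      = latb M K E v₂ + latb M (fun w => K w + 2 * M v₂ w) (E.erase v₂) v₁ := by
  have hK₁ := char_shift M K hK v₁
  have hK₂ := char_shift M K hK v₂
  unfold latb
  rw [latB_eq M hsym K hK E v₁, latB_eq M hsym K hK E v₂,
      latB_eq M hsym _ hK₁ (E.erase v₁) v₂, latB_eq M hsym _ hK₂ (E.erase v₂) v₁]
  have hfun : (fun w => K w + 2 * M v₁ w + 2 * M v₂ w)
      = (fun w => K w + 2 * M v₂ w + 2 * M v₁ w) := by funext w; ring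
  have hset : (E.erase v₁).erase v₂ = (E.erase v₂).erase v₁ := Finset.erase_right_comm
  rw [hfun, hset]
  obtain ⟨a, ha⟩ := char_even M K hK v₁
  obtain ⟨b, hb⟩ := char_even M K hK v₂
  have h12 : M v₁ v₂ = M v₂ v₁ := hsym v₁ v₂
  set g0 := latG M K E
  set g1 := latG M (fun w => K w + 2 * M v₁ w) (E.erase v₁)
  set g2 := latG M (fun w => K w + 2 * M v₂ w) (E.erase v₂)
  set g12 := latG M (fun w => K w + 2 * M v₂ w + 2 * M v₁ w) ((E.erase v₂).erase v₁)
  omega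
end

section
/- The J-map preserves the Maslov grading: for every characteristic vector K and every E ⊆ V, 2·g(K,E) + (1/4)·K² = 2·g(−K − Σ_{v∈E} 2v*, E) + (1/4)·(−K − Σ_{v∈E} 2v*)², where for a function L : V → ℤ one sets L² = Σ_{v,w∈V} (M⁻¹)(v,w)·L(v)·L(w) ∈ ℚ. -/
open Finset

variable {V : Type*}

/-- `L² = Σ_{v,w} (M⁻¹)(v,w) L(v) L(w) ∈ ℚ`. -/
noncomputable def sqQ [Fintype V] [DecidableEq V] (M : V → V → ℤ) (L : V → ℤ) : ℚ :=
  ∑ v, ∑ w, ((Matrix.of fun a b => (M a b : ℚ))⁻¹ v w) * (L v) * (L w)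

section AuxJ

variable [DecidableEq V]

private lemma dvdD (M : V → V → ℤ) (hsym : ∀ v w, M v w = M w v) (I : Finset V) :
    (2:ℤ) ∣ ((∑ v ∈ I, ∑ w ∈ I, M v w) - ∑ v ∈ I, M v v) := by
  classical
  induction I using Finset.induction_on with
  | empty => simp
  | insert a I ha ih =>
    rw [Finset.sum_insert ha, Finset.sum_insert ha, Finset.sum_insert ha]
    have h1 : ∀ v, ∑ w ∈ insert a I, M v w = M v a + ∑ w ∈ I, M v w := by
      intro v; rw [Finset.sum_insert ha]
    simp_rw [h1, Finset.sum_add_distrib]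
    have h2 : ∑ v ∈ I, M v a = ∑ v ∈ I, M a v :=
      Finset.sum_congr rfl fun v _ => hsym v a
    have h3 : ((M a a + ∑ w ∈ I, M a w) + ((∑ v ∈ I, M v a) + ∑ v ∈ I, ∑ w ∈ I, M v w))
        - (M a a + ∑ v ∈ I, M v v)
        = 2 * (∑ w ∈ I, M a w) + ((∑ v ∈ I, ∑ w ∈ I, M v w) - ∑ v ∈ I, M v v) := by
      rw [h2]; ring
    rw [h3]
    exact dvd_add ⟨_, rfl⟩ ih

private lemma dvdN (M : V → V → ℤ) (hsym : ∀ v w, M v w = M w v) (K : V → ℤ)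
    (hK : IsChar M K) (I : Finset V) :
    (2:ℤ) ∣ ((∑ v ∈ I, K v) + ∑ v ∈ I, ∑ w ∈ I, M v w) := by
  have h1 : ((∑ v ∈ I, K v) + ∑ v ∈ I, ∑ w ∈ I, M v w)
      = (∑ v ∈ I, (K v + M v v)) + ((∑ v ∈ I, ∑ w ∈ I, M v w) - ∑ v ∈ I, M v v) := by
    rw [Finset.sum_add_distrib]; ring
  rw [h1]
  refine dvd_add (Finset.dvd_sum fun v _ => ?_) (dvdD M hsym I)
  have h2 : (2:ℤ) ∣ (M v v - K v) := (hK v).dvd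
  obtain ⟨c, hc⟩ := h2
  exact ⟨c + K v, by linarith⟩

private lemma two_latF (M : V → V → ℤ) (hsym : ∀ v w, M v w = M w v) (K : V → ℤ)
    (hK : IsChar M K) (I : Finset V) :
    2 * latF M K I = (∑ v ∈ I, K v) + ∑ v ∈ I, ∑ w ∈ I, M v w :=
  Int.mul_ediv_cancel' (dvdN M hsym K hK I)

private lemma isCharJ (M : V → V → ℤ) (K : V → ℤ) (hK : IsChar M K) (E : Finset V) :
    IsChar M (fun w => -K w - 2 * ∑ v ∈ E, M v w) := by
  intro w
  have h := (hK w).dvd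
  obtain ⟨c, hc⟩ := h
  refine Int.modEq_iff_dvd.2 ⟨c + K w + ∑ v ∈ E, M v w, ?_⟩
  simp only
  linarith

private lemma numJ (M : V → V → ℤ) (hsym : ∀ v w, M v w = M w v) (K : V → ℤ)
    {E I : Finset V} (hIE : I ⊆ E) :
    (∑ w ∈ I, (-K w - 2 * ∑ v ∈ E, M v w)) + ∑ v ∈ I, ∑ w ∈ I, M v w
    = ((∑ v ∈ E \ I, K v) + ∑ v ∈ E \ I, ∑ w ∈ E \ I, M v w)
      - ((∑ v ∈ E, K v) + ∑ v ∈ E, ∑ w ∈ E, M v w) := by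
  have hL : ∑ w ∈ I, (-K w - 2 * ∑ v ∈ E, M v w)
      = -(∑ w ∈ I, K w) - 2 * ∑ w ∈ I, ∑ v ∈ E, M v w := by
    rw [Finset.sum_sub_distrib, ← Finset.mul_sum, Finset.sum_neg_distrib]
  have h1 : ∑ x ∈ I, ∑ y ∈ E, M y x = ∑ x ∈ E, ∑ y ∈ I, M x y := Finset.sum_comm
  have h2 : ∑ x ∈ I, ∑ y ∈ E, M x y = ∑ x ∈ E, ∑ y ∈ I, M x y := by
    rw [Finset.sum_comm]
    exact Finset.sum_congr rfl fun x _ => Finset.sum_congr rfl fun y _ => hsym y x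
  rw [hL]
  simp only [Finset.sum_sdiff_eq_sub hIE, Finset.sum_sub_distrib]
  linear_combination (-2 : ℤ) * h1 + h2

private lemma latG_le (M : V → V → ℤ) (K : V → ℤ) {E I : Finset V} (hIE : I ⊆ E) :
    latG M K E ≤ latF M K I :=
  Finset.min'_le _ _ (Finset.mem_image_of_mem _ (Finset.mem_powerset.2 hIE))

private lemma exists_latG (M : V → V → ℤ) (K : V → ℤ) (E : Finset V) :
    ∃ I, I ⊆ E ∧ latG M K E = latF M K I := by
  have h := Finset.min'_mem (E.powerset.image (latF M K))
    ⟨_, Finset.mem_image_of_mem _ (Finset.empty_mem_powerset E)⟩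
  obtain ⟨I, hI, hEq⟩ := Finset.mem_image.1 h
  exact ⟨I, Finset.mem_powerset.1 hI, hEq.symm⟩

private lemma latF_J (M : V → V → ℤ) (hsym : ∀ v w, M v w = M w v) (K : V → ℤ)
    (hK : IsChar M K) {E I : Finset V} (hIE : I ⊆ E) :
    latF M (fun w => -K w - 2 * ∑ v ∈ E, M v w) I
      = latF M K (E \ I) - latF M K E := by
  have e1 := two_latF M hsym _ (isCharJ M K hK E) I
  have e2 := two_latF M hsym K hK (E \ I)
  have e3 := two_latF M hsym K hK E
  have hnum := numJ M hsym K hIE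
  omega

private lemma latG_J (M : V → V → ℤ) (hsym : ∀ v w, M v w = M w v) (K : V → ℤ)
    (hK : IsChar M K) (E : Finset V) :
    latG M (fun w => -K w - 2 * ∑ v ∈ E, M v w) E = latG M K E - latF M K E := by
  apply le_antisymm
  · obtain ⟨I, hIE, hI⟩ := exists_latG M K E
    have h1 : latG M (fun w => -K w - 2 * ∑ v ∈ E, M v w) E
        ≤ latF M (fun w => -K w - 2 * ∑ v ∈ E, M v w) (E \ I) :=
      latG_le _ _ (Finset.sdiff_subset)
    rw [latF_J M hsym K hK (Finset.sdiff_subset), Finset.sdiff_sdiff_self_left,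
      Finset.inter_eq_right.2 hIE] at h1
    omega
  · obtain ⟨J, hJE, hJ⟩ := exists_latG M (fun w => -K w - 2 * ∑ v ∈ E, M v w) E
    rw [hJ, latF_J M hsym K hK hJE]
    have := latG_le M K (E := E) (I := E \ J) Finset.sdiff_subset
    omega

end AuxJ

section SqJ

open Matrix

variable [Fintype V] [DecidableEq V]

private lemma sqQ_eq (M : V → V → ℤ) (L : V → ℤ) :
    sqQ M L = (fun v => (L v : ℚ)) ⬝ᵥ
      ((Matrix.of fun a b => (M a b : ℚ))⁻¹ *ᵥ fun v => (L v : ℚ)) := by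
  unfold sqQ
  refine Finset.sum_congr rfl fun v _ => ?_
  simp only [Matrix.mulVec, dotProduct, Finset.mul_sum]
  exact Finset.sum_congr rfl fun w _ => by ring

private lemma detA_ne (M : V → V → ℤ) (hneg : NegDef M) :
    (Matrix.of fun a b => ((M a b : ℚ))).det ≠ 0 := by
  intro h
  obtain ⟨x, hx0, hx⟩ := Matrix.exists_mulVec_eq_zero_iff.2 h
  have hy : (fun v => (x v : ℝ)) ≠ 0 := by
    intro hy
    apply hx0
    funext v
    have := congrFun hy v
    simpa using this
  have hlt := hneg _ hy
  have hrow : ∀ v, ∑ w, (M v w : ℝ) * (x w : ℝ) = 0 := by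
    intro v
    have h2 : ∑ w, (M v w : ℚ) * x w = 0 := by
      have := congrFun hx v
      simpa [Matrix.mulVec, dotProduct] using this
    have h3 := congrArg (fun q : ℚ => (q : ℝ)) h2
    push_cast at h3
    simpa using h3
  have hzero : (∑ v, ∑ w, (M v w : ℝ) * (x v : ℝ) * (x w : ℝ)) = 0 := by
    calc ∑ v, ∑ w, (M v w : ℝ) * (x v : ℝ) * (x w : ℝ)
        = ∑ v, (x v : ℝ) * ∑ w, (M v w : ℝ) * (x w : ℝ) := by
          refine Finset.sum_congr rfl fun v _ => ?_
          rw [Finset.mul_sum]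
          exact Finset.sum_congr rfl fun w _ => by ring
      _ = 0 := by simp [hrow]
  rw [hzero] at hlt
  exact lt_irrefl _ hlt

private lemma sqQ_J (M : V → V → ℤ) (hsym : ∀ v w, M v w = M w v) (hneg : NegDef M)
    (K : V → ℤ) (E : Finset V) :
    sqQ M (fun w => -K w - 2 * ∑ v ∈ E, M v w)
      = sqQ M K + 4 * (∑ v ∈ E, (K v : ℚ)) + 4 * ∑ v ∈ E, ∑ w ∈ E, (M v w : ℚ) := by
  classical
  set A : Matrix V V ℚ := Matrix.of fun a b => (M a b : ℚ) with hA
  have hdet : IsUnit A.det := isUnit_iff_ne_zero.2 (detA_ne M hneg)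
  set B := A⁻¹ with hB
  have hBA : B * A = 1 := Matrix.nonsing_inv_mul A hdet
  have hAsym : Aᵀ = A := by
    ext v w
    simp only [Matrix.transpose_apply, hA, Matrix.of_apply]
    rw [hsym]
  have hBsym : Bᵀ = B := by
    rw [hB, Matrix.transpose_nonsing_inv, hAsym]
  set eE : V → ℚ := fun v => if v ∈ E then 1 else 0 with heE
  set s : V → ℚ := A *ᵥ eE with hs
  have hsv : ∀ w, s w = ∑ v ∈ E, (M v w : ℚ) := by
    intro w
    have h0 : s w = ∑ u, (M w u : ℚ) * (if u ∈ E then 1 else 0) := by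
      rw [hs]; simp [Matrix.mulVec, dotProduct, heE, hA]
    rw [h0]
    simp only [mul_ite, mul_one, mul_zero, Finset.sum_ite_mem, Finset.univ_inter]
    exact Finset.sum_congr rfl fun u _ => by rw [hsym]
  have hBs : B *ᵥ s = eE := by
    rw [hs, Matrix.mulVec_mulVec, hBA, Matrix.one_mulVec]
  have hsB : ∀ x : V → ℚ, s ⬝ᵥ (B *ᵥ x) = eE ⬝ᵥ x := by
    intro x
    rw [Matrix.dotProduct_mulVec, ← hBsym, Matrix.vecMul_transpose, hBs]
  set Kq : V → ℚ := fun v => (K v : ℚ) with hKq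
  have hK'cast : (fun v => (((fun w => -K w - 2 * ∑ u ∈ E, M u w) v : ℤ) : ℚ))
      = -(Kq + (2:ℚ) • s) := by
    funext w
    simp only [Pi.neg_apply, Pi.add_apply, Pi.smul_apply, smul_eq_mul, hKq, hsv w]
    push_cast
    ring
  have hdotK : Kq ⬝ᵥ eE = ∑ v ∈ E, (K v : ℚ) := by
    simp only [dotProduct, hKq, heE, mul_ite, mul_one, mul_zero,
      Finset.sum_ite_mem, Finset.univ_inter]
  have hdotK2 : eE ⬝ᵥ Kq = ∑ v ∈ E, (K v : ℚ) := by
    simp only [dotProduct, hKq, heE, ite_mul, one_mul, zero_mul,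
      Finset.sum_ite_mem, Finset.univ_inter]
  have hdots : eE ⬝ᵥ s = ∑ v ∈ E, ∑ w ∈ E, (M v w : ℚ) := by
    simp only [dotProduct, heE, ite_mul, one_mul, zero_mul,
      Finset.sum_ite_mem, Finset.univ_inter]
    rw [Finset.sum_congr rfl fun w _ => hsv w]
    exact Finset.sum_comm
  rw [sqQ_eq, sqQ_eq, ← hA, ← hB]
  rw [hK'cast]
  rw [Matrix.mulVec_neg, dotProduct_neg, neg_dotProduct, neg_neg]
  rw [Matrix.mulVec_add, Matrix.mulVec_smul, hBs]
  rw [dotProduct_add, add_dotProduct, add_dotProduct]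
  rw [dotProduct_smul, smul_dotProduct, smul_dotProduct,
    dotProduct_smul]
  rw [hsB, hdotK, hdotK2, dotProduct_comm s eE, hdots]
  simp only [smul_eq_mul, hKq]
  ring

end SqJ

/-- the `J`-map preserves the Maslov grading:
`2g(K,E) + (1/4)K² = 2g(−K − Σ_{v∈E} 2v*, E) + (1/4)(−K − Σ_{v∈E} 2v*)²`. -/
theorem stmt7 [Fintype V] [DecidableEq V] (M : V → V → ℤ)
    (hsym : ∀ v w, M v w = M w v)
    (hoff : ∀ v w, v ≠ w → M v w = 0 ∨ M v w = 1)
    (hneg : NegDef M)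
    (K : V → ℤ) (hK : IsChar M K) (E : Finset V) :
    2 * (latG M K E : ℚ) + (1 / 4) * sqQ M K
      = 2 * (latG M (fun w => -K w - 2 * ∑ v ∈ E, M v w) E : ℚ)
        + (1 / 4) * sqQ M (fun w => -K w - 2 * ∑ v ∈ E, M v w) := by
  have hg := latG_J M hsym K hK E
  have hsq := sqQ_J M hsym hneg K E
  have hc := two_latF M hsym K hK E
  rw [hg, hsq]
  have hcQ : (2:ℚ) * (latF M K E : ℚ)
      = (∑ v ∈ E, (K v : ℚ)) + ∑ v ∈ E, ∑ w ∈ E, (M v w : ℚ) := by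
    exact_mod_cast hc
  push_cast
  linear_combination hcQ
end
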